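/- Let n ≥ p ≥ 1 be natural numbers. Then the set of n-tuples (x₁, …, x_n) ∈ (ℝᵖ)ⁿ for which the matrix A = ∑_{i=1}^n x_i x_iᵀ is NOT positive definite has Lebesgue measure zero in (ℝᵖ)ⁿ ≅ ℝ^{np}. (Hence, for X₁, …, X_n i.i.d. N_p(0, Σ) with Σ positive definite and n ≥ p, the matrix A = ∑ X_i X_iᵀ is positive definite with probability one.) -/

import Mathlib

open Matrix MeasureTheory

section Aux

/-- Measurability of a "selected-columns" determinant. -/
lemma measurable_det_sel {p q r : ℕ} (g : Fin p → Fin q) (f : Fin p → Fin r) :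
    Measurable fun N : Fin r → Fin q → ℝ =>
      Matrix.det (Matrix.of fun i j => N (f i) (g j)) := by
  have : Continuous fun N : Fin r → Fin q → ℝ =>
      Matrix.det (Matrix.of fun i j => N (f i) (g j)) := by
    refine Continuous.matrix_det ?_
    exact continuous_matrix fun i j =>
      (continuous_apply (g j)).comp (continuous_apply (f i))
  exact this.measurable

/-- The preimage of a null set under coordinate restriction is null. -/
lemma restrict_null {α : Type*} [MeasureSpace α] [SigmaFinite (volume : Measure α)]
    {k m : ℕ} (g : Fin k → Fin m) (hg : Function.Injective g)
    (Z : Set (Fin k → α)) (hZm : MeasurableSet Z) (hZ : volume Z = 0) :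
    volume {x : Fin m → α | x ∘ g ∈ Z} = 0 := by
  classical
  set pI : Fin m → Prop := fun i => ∃ j, g j = i with hpI
  let e : Fin k ≃ {i // pI i} :=
    (Equiv.ofInjective g hg).trans (Equiv.subtypeEquivRight (fun i => Iff.rfl))
  let G := MeasurableEquiv.piCongrLeft (fun _ : {i // pI i} => α) e
  have hG : MeasurePreserving G :=
    volume_measurePreserving_piCongrLeft (fun _ : {i // pI i} => α) e
  set Z₁ : Set ({i // pI i} → α) := G.symm ⁻¹' Z with hZ₁def
  have hZ₁m : MeasurableSet Z₁ := G.symm.measurable hZm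
  have hZ₁ : volume Z₁ = 0 := by
    rw [hZ₁def, (MeasurePreserving.symm G hG).measure_preimage hZm.nullMeasurableSet, hZ]
  have hF : MeasurePreserving
      (MeasurableEquiv.piEquivPiSubtypeProd (fun _ : Fin m => α) pI) :=
    volume_preserving_piEquivPiSubtypeProd (fun _ : Fin m => α) pI
  have hset : {x : Fin m → α | x ∘ g ∈ Z}
      = (MeasurableEquiv.piEquivPiSubtypeProd (fun _ : Fin m => α) pI) ⁻¹'
          (Z₁ ×ˢ Set.univ) := by
    ext x
    simp only [Set.mem_setOf_eq, Set.mem_preimage, Set.mem_prod, Set.mem_univ, and_true,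
      MeasurableEquiv.piEquivPiSubtypeProd, Equiv.piEquivPiSubtypeProd,
      MeasurableEquiv.coe_mk, Equiv.coe_fn_mk, hZ₁def]
    have key : (fun i : {i // pI i} => x i.val) = G (x ∘ g) := by
      funext i
      obtain ⟨j, rfl⟩ : ∃ j, e j = i := ⟨e.symm i, e.apply_symm_apply i⟩
      have h1 : G (x ∘ g) (e j) = (x ∘ g) j := by
        rw [MeasurableEquiv.coe_piCongrLeft]
        exact Equiv.piCongrLeft_apply_apply _ e _ j
      rw [h1]; rfl
    rw [key, MeasurableEquiv.symm_apply_apply]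
  rw [hset, hF.measure_preimage ((hZ₁m.prod MeasurableSet.univ).nullMeasurableSet),
    Measure.volume_eq_prod, Measure.prod_prod, hZ₁, zero_mul]

end Aux

section Det

/-- The set of `p`-tuples of vectors whose "selected columns" square matrix is
singular has measure zero. -/
lemma det_sel_null : ∀ (p : ℕ) {q : ℕ} (g : Fin p → Fin q), Function.Injective g →
    volume {N : Fin p → Fin q → ℝ | Matrix.det (Matrix.of fun i j => N i (g j)) = 0} = 0 := by
  intro p
  induction p with
  | zero =>
      intro q g hg
      have : {N : Fin 0 → Fin q → ℝ | Matrix.det (Matrix.of fun i j => N i (g j)) = 0} = ∅ := by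
        ext N; simp [Matrix.det_fin_zero]
      simp [this]
  | succ p IH =>
      intro q g hg
      classical
      set β := Fin q → ℝ with hβ
      set T : Set ((Fin p → β) × β) :=
        {y | Matrix.det (Matrix.of fun i j => (Fin.cons y.2 y.1 : Fin (p+1) → β) i (g j)) = 0} with hT
      have hTcont : Continuous fun y : (Fin p → β) × β =>
          Matrix.det (Matrix.of fun i j => (Fin.cons y.2 y.1 : Fin (p+1) → β) i (g j)) := by
        refine Continuous.matrix_det (continuous_matrix fun i j => ?_)
        refine Fin.cases ?_ ?_ i
        · simpa [Function.comp_def] using (continuous_apply (g j)).comp continuous_snd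
        · intro k
          simpa [Function.comp_def] using (continuous_apply (g j)).comp ((continuous_apply k).comp continuous_fst)
      have hTm : MeasurableSet T := hTcont.measurable (measurableSet_singleton 0)
      have hF : MeasurePreserving (MeasurableEquiv.piFinSuccAbove (fun _ : Fin (p+1) => β) 0) :=
        volume_preserving_piFinSuccAbove (fun _ : Fin (p+1) => β) 0
      have hset : {N : Fin (p+1) → β | Matrix.det (Matrix.of fun i j => N i (g j)) = 0}
          = (MeasurableEquiv.piFinSuccAbove (fun _ : Fin (p+1) => β) 0) ⁻¹'
              (Prod.swap ⁻¹' T) := by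
        ext x
        have hx : (Fin.cons ((MeasurableEquiv.piFinSuccAbove (fun _ : Fin (p+1) => β) 0) x).1
            ((MeasurableEquiv.piFinSuccAbove (fun _ : Fin (p+1) => β) 0) x).2
              : Fin (p+1) → β) = x := by
          funext i
          refine Fin.cases ?_ ?_ i
          · simp [MeasurableEquiv.piFinSuccAbove]
          · intro k
            simp [MeasurableEquiv.piFinSuccAbove, Fin.removeNth, Fin.zero_succAbove, Fin.tail]
        change (Matrix.det (Matrix.of fun i j => x i (g j)) = 0) ↔
          (Matrix.det (Matrix.of fun i j =>
            (Fin.cons ((MeasurableEquiv.piFinSuccAbove (fun _ : Fin (p+1) => β) 0) x).1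
              ((MeasurableEquiv.piFinSuccAbove (fun _ : Fin (p+1) => β) 0) x).2
                : Fin (p+1) → β) i (g j)) = 0)
        rw [hx]
      -- the bad tails
      set B : Set (Fin p → β) :=
        {N | Matrix.det (Matrix.of fun i j => N i (g (Fin.succ j))) = 0} with hB
      have hBnull : volume B = 0 := IH (g ∘ Fin.succ) (hg.comp (Fin.succ_injective p))
      have hsec : ∀ N : Fin p → β, N ∉ B → volume (Prod.mk N ⁻¹' T) = 0 := by
        intro N hN
        set W : Fin p → Fin (p+1) → ℝ := fun i j => N i (g j) with hW
        have hupd : ∀ u w : Fin (p+1) → ℝ,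
            Matrix.of (Fin.cons u W) = Matrix.updateRow (Matrix.of (Fin.cons w W)) 0 u := by
          intro u w
          ext i j
          refine Fin.cases ?_ ?_ i
          · simp [Matrix.updateRow_self]
          · intro k
            simp [Matrix.updateRow_ne (Fin.succ_ne_zero k)]
        set ℓ : β →ₗ[ℝ] ℝ :=
          { toFun := fun r => Matrix.det (Matrix.of (Fin.cons (fun j => r (g j)) W))
            map_add' := by
              intro r s
              show Matrix.det (Matrix.of (Fin.cons (fun j => (r + s) (g j)) W))
                = Matrix.det (Matrix.of (Fin.cons (fun j => r (g j)) W))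
                  + Matrix.det (Matrix.of (Fin.cons (fun j => s (g j)) W))
              have h1 : (fun j => (r + s) (g j))
                  = (fun j => r (g j)) + fun j => s (g j) := rfl
              rw [h1, hupd ((fun j => r (g j)) + fun j => s (g j)) 0,
                Matrix.det_updateRow_add, ← hupd (fun j => r (g j)) 0,
                ← hupd (fun j => s (g j)) 0]
            map_smul' := by
              intro c r
              show Matrix.det (Matrix.of (Fin.cons (fun j => (c • r) (g j)) W))
                = c * Matrix.det (Matrix.of (Fin.cons (fun j => r (g j)) W))
              have h1 : (fun j => (c • r) (g j)) = c • fun j => r (g j) := rfl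
              rw [h1, hupd (c • fun j => r (g j)) 0, Matrix.det_updateRow_smul,
                ← hupd (fun j => r (g j)) 0] } with hℓ
        have hmat : ∀ r : β, (Matrix.of fun i j => (Fin.cons r N : Fin (p+1) → β) i (g j))
            = Matrix.of (Fin.cons (fun j => r (g j)) W) := by
          intro r
          ext i j
          refine Fin.cases ?_ ?_ i
          · simp
          · intro k; simp [hW]
        have hone : (fun j => (Pi.single (g 0) (1:ℝ) : Fin q → ℝ) (g j)) = Pi.single (0 : Fin (p+1)) 1 := by
          funext j
          by_cases hj : j = 0
          · subst hj; simp
          · rw [Pi.single_eq_of_ne hj, Pi.single_eq_of_ne (fun hc => hj (hg hc))]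
        have hval : ℓ (Pi.single (g 0) (1:ℝ) : Fin q → ℝ)
            = Matrix.det (Matrix.of fun i j => N i (g (Fin.succ j))) := by
          show Matrix.det (Matrix.of (Fin.cons (fun j => (Pi.single (g 0) (1:ℝ) : Fin q → ℝ) (g j)) W)) = _
          rw [hone, Matrix.det_succ_row_zero]
          rw [Finset.sum_eq_single 0]
          · simp only [Fin.val_zero, pow_zero, one_mul, Matrix.of_apply, Fin.cons_zero,
              Pi.single_eq_same]
            congr 1
          · intro b _ hb
            have : (Matrix.of (Fin.cons (Pi.single (0 : Fin (p+1)) (1:ℝ)) W)) 0 b = 0 := by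
              simp [Pi.single_eq_of_ne hb]
            rw [this, mul_zero, zero_mul]
          · intro h; exact absurd (Finset.mem_univ _) h
        have hℓne : ℓ ≠ 0 := by
          intro h0
          apply hN
          rw [hB, Set.mem_setOf_eq, ← hval, h0]
          rfl
        have hkerne : LinearMap.ker ℓ ≠ ⊤ := by
          intro htop
          exact hℓne (LinearMap.ker_eq_top.mp htop)
        have hsubset : Prod.mk N ⁻¹' T = (LinearMap.ker ℓ : Set β) := by
          ext r
          simp only [Set.mem_preimage, hT, Set.mem_setOf_eq, SetLike.mem_coe,
            LinearMap.mem_ker, hℓ, LinearMap.coe_mk, AddHom.coe_mk, hmat r]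
        rw [hsubset]
        exact Measure.addHaar_submodule volume (LinearMap.ker ℓ) hkerne
      -- assemble
      rw [hset, hF.measure_preimage (measurable_swap hTm).nullMeasurableSet,
        Measure.volume_eq_prod, ← Measure.map_apply measurable_swap hTm, Measure.prod_swap,
        Measure.measure_prod_null hTm]
      have hae : ∀ᵐ N : Fin p → β, N ∉ B := measure_eq_zero_iff_ae_notMem.mp hBnull
      filter_upwards [hae] with N hN
      exact hsec N hN

end Det

lemma vecMulVec_mulVec' {m : ℕ} (w u v : Fin m → ℝ) :
    Matrix.vecMulVec w u *ᵥ v = (u ⬝ᵥ v) • w := by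
  ext a
  simp [Matrix.mulVec, Matrix.vecMulVec_apply, dotProduct, Finset.sum_mul, Finset.mul_sum,
    mul_comm, mul_left_comm, mul_assoc]

/-- For `n ≥ p ≥ 1`, the set of `n`-tuples `(x₁, …, xₙ)` of vectors in `ℝᵖ`
for which `∑ i, xᵢ xᵢᵀ` is not positive definite has Lebesgue measure zero. -/
theorem measure_not_posDef_sum_outer_eq_zero
    (n p : ℕ) (hp : 1 ≤ p) (hnp : p ≤ n) :
    volume {x : Fin n → Fin p → ℝ |
      ¬ Matrix.PosDef (∑ i, Matrix.vecMulVec (x i) (x i))} = 0 := by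
  classical
  set Z : Set (Fin p → Fin p → ℝ) :=
    {N | Matrix.det (Matrix.of fun i j => N i (id j)) = 0} with hZ
  have hZm : MeasurableSet Z := (measurable_det_sel id id) (measurableSet_singleton 0)
  have hZ0 : volume Z = 0 := det_sel_null p id Function.injective_id
  have key : volume {x : Fin n → (Fin p → ℝ) | x ∘ Fin.castLE hnp ∈ Z} = 0 :=
    restrict_null (Fin.castLE hnp) (Fin.castLE_injective hnp) Z hZm hZ0
  refine measure_mono_null ?_ key
  intro x hx
  simp only [Set.mem_setOf_eq] at hx ⊢
  by_contra hdet
  have hd : Matrix.det (Matrix.of fun i j => x (Fin.castLE hnp i) j) ≠ 0 := fun h => hdet h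
  refine hx (Matrix.posDef_iff_dotProduct_mulVec.mpr ⟨?_, ?_⟩)
  · show (∑ i, Matrix.vecMulVec (x i) (x i))ᴴ = _
    ext a b
    simp [Matrix.conjTranspose_apply, Matrix.sum_apply, Matrix.vecMulVec_apply, mul_comm]
  · intro v hv
    have hstar : star v = v := funext fun i => star_trivial _
    have hquad : dotProduct (star v) ((∑ i, Matrix.vecMulVec (x i) (x i)) *ᵥ v)
        = ∑ i, (x i ⬝ᵥ v) * (x i ⬝ᵥ v) := by
      rw [hstar]
      have h0 : (∑ i, Matrix.vecMulVec (x i) (x i)) *ᵥ v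
          = ∑ i, Matrix.vecMulVec (x i) (x i) *ᵥ v := by
        ext a
        simp only [Matrix.mulVec, dotProduct, Matrix.sum_apply, Finset.sum_apply,
          Finset.sum_mul]
        exact Finset.sum_comm
      have h1 : (∑ i, Matrix.vecMulVec (x i) (x i)) *ᵥ v
          = ∑ i, (x i ⬝ᵥ v) • x i := by
        rw [h0]
        exact Finset.sum_congr rfl fun i _ => vecMulVec_mulVec' _ _ _
      have h2 : v ⬝ᵥ ∑ i, (x i ⬝ᵥ v) • x i = ∑ i, v ⬝ᵥ ((x i ⬝ᵥ v) • x i) := by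
        simp only [dotProduct, Finset.sum_apply, Finset.mul_sum]
        exact Finset.sum_comm
      rw [h1, h2]
      refine Finset.sum_congr rfl fun i _ => ?_
      rw [dotProduct_smul, smul_eq_mul, dotProduct_comm]
    rw [hquad]
    have hnn : ∀ i ∈ Finset.univ, (0:ℝ) ≤ (x i ⬝ᵥ v) * (x i ⬝ᵥ v) :=
      fun i _ => mul_self_nonneg _
    rcases (Finset.sum_nonneg hnn).lt_or_eq with hlt | heq
    · exact hlt
    · exfalso
      have hall : ∀ i ∈ Finset.univ, (x i ⬝ᵥ v) * (x i ⬝ᵥ v) = 0 :=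
        (Finset.sum_eq_zero_iff_of_nonneg hnn).mp heq.symm
      have hBv : (Matrix.of fun i j => x (Fin.castLE hnp i) j) *ᵥ v = 0 := by
        ext i
        have := hall (Fin.castLE hnp i) (Finset.mem_univ _)
        have hdot : x (Fin.castLE hnp i) ⬝ᵥ v = 0 := mul_self_eq_zero.mp this
        simpa [Matrix.mulVec, dotProduct] using hdot
      exact hv (Matrix.eq_zero_of_mulVec_eq_zero hd hBv)
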